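/- Let x, y ∈ ℝ^d and let w₁, w₂ ≥ 0 with w₁ + w₂ > 0. Then the infimum over all pairs (a, b) ∈ ℝ^d × ℝ^d satisfying a^c ≤ b^c for every coordinate c ∈ [d] of the quantity (1/2) w₁ ‖x − a‖₂² + (1/2) w₂ ‖y − b‖₂² equals (w₁ w₂ / (2(w₁ + w₂))) Σ_{c∈[d]} (max(x^c − y^c, 0))², and this infimum is attained. -/

import Mathlib

noncomputable section

private lemma keycoord (w₁ w₂ : ℝ) (hw₁ : 0 ≤ w₁) (hw₂ : 0 ≤ w₂) (hsum : 0 < w₁ + w₂)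
    (x y a b : ℝ) (hab : a ≤ b) :
    w₁ * w₂ / (2 * (w₁ + w₂)) * (max (x - y) 0)^2 ≤
      1/2 * w₁ * (x - a)^2 + 1/2 * w₂ * (y - b)^2 := by
  rcases le_or_gt (x - y) 0 with h | h
  · rw [max_eq_right h]
    have : (0:ℝ) ≤ 1/2 * w₁ * (x - a)^2 + 1/2 * w₂ * (y - b)^2 := by positivity
    simpa using this
  · rw [max_eq_left h.le, div_mul_eq_mul_div, div_le_iff₀ (by positivity)]
    nlinarith [sq_nonneg (w₁*(x-a) - w₂*(b-y)),
      mul_nonneg (mul_nonneg hw₁ hw₂)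
        (mul_nonneg (sub_nonneg.2 hab) (by linarith : (0:ℝ) ≤ (x-a)+(b-y)+(x-y)))]

private lemma normsq {d : ℕ} (v : EuclideanSpace ℝ (Fin d)) : ‖v‖^2 = ∑ c, (v c)^2 := by
  rw [EuclideanSpace.norm_eq, Real.sq_sqrt (by positivity)]
  simp [sq_abs]

/-- the infimum of `(1/2)w₁‖x−a‖² + (1/2)w₂‖y−b‖²` over pairs `a ≤ b`
(componentwise) equals `w₁w₂/(2(w₁+w₂)) Σ_c (max(x^c−y^c,0))²`, and it is attained. -/
theorem stmt2 {d : ℕ} (hd : 0 < d) (x y : EuclideanSpace ℝ (Fin d)) (w₁ w₂ : ℝ)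
    (hw₁ : 0 ≤ w₁) (hw₂ : 0 ≤ w₂) (hsum : 0 < w₁ + w₂) :
    IsLeast {v : ℝ | ∃ a b : EuclideanSpace ℝ (Fin d), (∀ c, a c ≤ b c) ∧
        v = (1/2 : ℝ) * w₁ * ‖x - a‖^2 + (1/2 : ℝ) * w₂ * ‖y - b‖^2}
      (w₁ * w₂ / (2 * (w₁ + w₂)) * ∑ c, (max (x c - y c) 0)^2) := by
  constructor
  · -- membership: explicit minimizer
    set m : Fin d → ℝ := fun c => (w₁ * x c + w₂ * y c) / (w₁ + w₂) with hm
    set A : EuclideanSpace ℝ (Fin d) := WithLp.toLp 2 (fun c => if x c ≤ y c then x c else m c) with hA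
    set B : EuclideanSpace ℝ (Fin d) := WithLp.toLp 2 (fun c => if x c ≤ y c then y c else m c) with hB
    refine ⟨A, B, ?_, ?_⟩
    · intro c
      show (if x c ≤ y c then x c else m c) ≤ (if x c ≤ y c then y c else m c)
      split_ifs with h
      · exact h
      · exact le_refl _
    · rw [normsq, normsq, Finset.mul_sum, Finset.mul_sum, Finset.mul_sum,
        ← Finset.sum_add_distrib]
      refine Finset.sum_congr rfl fun c _ => ?_
      have hx : (x - A) c = x c - (if x c ≤ y c then x c else m c) := rfl
      have hy : (y - B) c = y c - (if x c ≤ y c then y c else m c) := rfl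
      rw [hx, hy]
      split_ifs with h
      · rw [max_eq_right (by linarith)]
        simp
      · rw [max_eq_left (by linarith)]
        have h0 : w₁ + w₂ ≠ 0 := ne_of_gt hsum
        simp only [hm]
        field_simp
        ring
  · rintro v ⟨a, b, hab, rfl⟩
    rw [normsq, normsq, Finset.mul_sum, Finset.mul_sum, Finset.mul_sum,
      ← Finset.sum_add_distrib]
    refine Finset.sum_le_sum fun c _ => ?_
    have hx : (x - a) c = x c - a c := rfl
    have hy : (y - b) c = y c - b c := rfl
    rw [hx, hy]
    exact keycoord w₁ w₂ hw₁ hw₂ hsum (x c) (y c) (a c) (b c) (hab c)
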